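/- arXiv:1803.10504 — 2 statements merged into one kernel-verified Lean document; each statement's English description precedes it below -/
import Mathlib

section
/- Let (X, E) be a connected coarse space and p a prime. There exists a group coarse structure E′ on the free abelian group A(X) of exponent p on X such that the subspace coarse structure E′|_X equals E. -/
/-- A coarse structure on `X`. -/
def IsCoarseStructure {X : Type*} (E : Set (Set (X × X))) : Prop :=
  (∀ ε ∈ E, ∀ x : X, (x, x) ∈ ε) ∧
  (∀ ε ∈ E, ∀ δ ∈ E, {p : X × X | ∃ z : X, (p.1, z) ∈ ε ∧ (z, p.2) ∈ δ} ∈ E) ∧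
  (∀ ε ∈ E, {p : X × X | (p.2, p.1) ∈ ε} ∈ E) ∧
  (∀ ε ∈ E, ∀ ε' ⊆ ε, (∀ x : X, (x, x) ∈ ε') → ε' ∈ E)

/-- Connectedness: any two points are related by some entourage. -/
def IsConnectedCoarse {X : Type*} (E : Set (Set (X × X))) : Prop :=
  ∀ x y : X, ∃ ε ∈ E, (x, y) ∈ ε

/-- The `n`-fold sumset of `S` in an additive commutative group. -/
def nSumset {A : Type*} [AddCommGroup A] (S : Set A) (n : ℕ) : Set A :=
  {a | ∃ f : Fin n → A, (∀ i, f i ∈ S) ∧ a = ∑ i, f i}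

/-- The set `Y_ε = {x − y : (x, y) ∈ ε}` of differences of generators of the free
abelian group `A(X) = ⊕_{x ∈ X} ℤ/p` of exponent `p` on `X`. -/
def Yset {X : Type*} (p : ℕ) (ε : Set (X × X)) : Set (X →₀ ZMod p) :=
  {a | ∃ q ∈ ε, a = Finsupp.single q.1 (1 : ZMod p) - Finsupp.single q.2 (1 : ZMod p)}

/-- The coefficient-sum homomorphism `A(X) → ℤ/p`. -/
noncomputable def coeffSum (X : Type*) (p : ℕ) : (X →₀ ZMod p) →+ ZMod p :=
  Finsupp.liftAddHom fun _ : X => AddMonoidHom.id (ZMod p)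

/-- A coarse (bornologous) mapping. -/
def IsCoarseMap {X Y : Type*} (EX : Set (Set (X × X))) (EY : Set (Set (Y × Y)))
    (f : X → Y) : Prop :=
  ∀ ε ∈ EX, ∃ δ ∈ EY, ∀ q ∈ ε, (f q.1, f q.2) ∈ δ

/-- The product coarse structure. -/
def prodCoarse {X Y : Type*} (EX : Set (Set (X × X))) (EY : Set (Set (Y × Y))) :
    Set (Set ((X × Y) × (X × Y))) :=
  {η | (∀ q : X × Y, (q, q) ∈ η) ∧ ∃ ε ∈ EX, ∃ δ ∈ EY,
    η ⊆ {q : (X × Y) × (X × Y) | (q.1.1, q.2.1) ∈ ε ∧ (q.1.2, q.2.2) ∈ δ}}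

/-- A group coarse structure on an additive group: addition and negation are coarse. -/
def IsAddCoarseGroup {A : Type*} [AddGroup A] (E : Set (Set (A × A))) : Prop :=
  IsCoarseMap (prodCoarse E E) E (fun q => q.1 + q.2) ∧
  IsCoarseMap E E (fun a : A => -a)

namespace FreeAbCoarseAux

variable {X : Type*}

def comp2 (ε δ : Set (X × X)) : Set (X × X) := {q | ∃ z, (q.1, z) ∈ ε ∧ (z, q.2) ∈ δ}

def symm2 (ε : Set (X × X)) : Set (X × X) := ε ∪ {q | (q.2, q.1) ∈ ε}

def iterEnt (τ : Set (X × X)) : ℕ → Set (X × X)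
  | 0 => τ
  | n + 1 => comp2 τ (iterEnt τ n)

def listSum (p : ℕ) (n : ℕ) (τ : Set (X × X)) : Set (X →₀ ZMod p) :=
  {a | ∃ L : List (X × X), L.length ≤ n ∧ (∀ e ∈ L, e ∈ τ) ∧
    a = (L.map fun e => Finsupp.single e.1 (1 : ZMod p) - Finsupp.single e.2 1).sum}

variable {E : Set (Set (X × X))} {ε δ τ τ' : Set (X × X)} {p n m : ℕ}

lemma comp2_mem (hE : IsCoarseStructure E) (hε : ε ∈ E) (hδ : δ ∈ E) : comp2 ε δ ∈ E :=
  hE.2.1 ε hε δ hδ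

lemma union_mem (hE : IsCoarseStructure E) (hε : ε ∈ E) (hδ : δ ∈ E) : ε ∪ δ ∈ E := by
  refine hE.2.2.2 _ (comp2_mem hE hε hδ) _ ?_ ?_
  · rintro ⟨x, y⟩ (h | h)
    · exact ⟨y, h, hE.1 δ hδ y⟩
    · exact ⟨x, hE.1 ε hε x, h⟩
  · intro x; exact Or.inl (hE.1 ε hε x)

lemma symm2_mem (hE : IsCoarseStructure E) (hε : ε ∈ E) : symm2 ε ∈ E :=
  union_mem hE hε (hE.2.2.1 ε hε)

lemma symm2_refl (hrefl : ∀ x : X, (x, x) ∈ ε) : ∀ x : X, (x, x) ∈ symm2 ε :=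
  fun x => Or.inl (hrefl x)

lemma symm2_swap {a b : X} (h : (a, b) ∈ symm2 ε) : (b, a) ∈ symm2 ε := by
  rcases h with h | h
  · exact Or.inr h
  · exact Or.inl h

lemma symm2_union_subset : symm2 ε ∪ symm2 δ ⊆ symm2 (ε ∪ δ) := by
  rintro ⟨a, b⟩ ((h | h) | (h | h))
  · exact Or.inl (Or.inl h)
  · exact Or.inr (Or.inl h)
  · exact Or.inl (Or.inr h)
  · exact Or.inr (Or.inr h)

lemma iterEnt_mem (hE : IsCoarseStructure E) (hτ : τ ∈ E) : ∀ n, iterEnt τ n ∈ E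
  | 0 => hτ
  | n + 1 => comp2_mem hE hτ (iterEnt_mem hE hτ n)

lemma iterEnt_refl (h : ∀ x : X, (x, x) ∈ τ) : ∀ n, ∀ x : X, (x, x) ∈ iterEnt τ n
  | 0, x => h x
  | n + 1, x => ⟨x, h x, iterEnt_refl h n x⟩

lemma iterEnt_mono_succ (h : ∀ x : X, (x, x) ∈ τ) : ∀ n, iterEnt τ n ⊆ iterEnt τ (n + 1) := by
  intro n
  induction n with
  | zero => rintro ⟨a, b⟩ hq; exact ⟨b, hq, h b⟩
  | succ n ih => rintro ⟨a, b⟩ ⟨z, h1, h2⟩; exact ⟨z, h1, ih h2⟩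

lemma chain_mem_iterEnt (hrefl : ∀ x : X, (x, x) ∈ τ) :
    ∀ M m (v : ℕ → X), 1 ≤ m → m ≤ M + 1 → (∀ i < m, (v i, v (i + 1)) ∈ τ) →
      (v 0, v m) ∈ iterEnt τ M := by
  intro M
  induction M with
  | zero =>
    intro m v h1 h2 hc
    have hm : m = 1 := by omega
    subst hm
    exact hc 0 (by omega)
  | succ M ih =>
    intro m v h1 h2 hc
    rcases Nat.lt_or_ge m (M + 2) with h | h
    · exact iterEnt_mono_succ hrefl _ (ih m v h1 (by omega) hc)
    · have hm : m = M + 2 := by omega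
      subst hm
      refine ⟨v 1, hc 0 (by omega), ?_⟩
      have := ih (M + 1) (fun i => v (i + 1)) (by omega) le_rfl
        (fun i hi => hc (i + 1) (by omega))
      simpa using this

lemma exists_chain_of_reflTransGen {R : X → X → Prop} {a b : X}
    (h : Relation.ReflTransGen R a b) :
    ∃ (m : ℕ) (v : ℕ → X), v 0 = a ∧ v m = b ∧ ∀ i < m, R (v i) (v (i + 1)) := by
  induction h with
  | refl => exact ⟨0, fun _ => a, rfl, rfl, by omega⟩
  | @tail b' c' _ hstep ih =>
    obtain ⟨m, v, h0, hm, hc⟩ := ih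
    refine ⟨m + 1, fun t => if t ≤ m then v t else c', by simpa using h0, by simp, ?_⟩
    intro i hi
    rcases Nat.lt_or_ge i m with h' | h'
    · simp only [if_pos (by omega : i ≤ m), if_pos (by omega : i + 1 ≤ m)]
      exact hc i h'
    · have : i = m := by omega
      subst this
      simp only [if_pos le_rfl, if_neg (by omega : ¬ i + 1 ≤ i), hm]
      exact hstep

lemma shorten {R : X → X → Prop} {s : Finset X} (hR : ∀ u v, R u v → u ∈ s ∧ v ∈ s) :
    ∀ m (v : ℕ → X), 1 ≤ m → v 0 ≠ v m → (∀ i < m, R (v i) (v (i + 1))) →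
    ∃ (m' : ℕ) (w : ℕ → X), 1 ≤ m' ∧ m' ≤ s.card ∧ w 0 = v 0 ∧ w m' = v m ∧
      ∀ i < m', R (w i) (w (i + 1)) := by
  intro m
  induction m using Nat.strong_induction_on with
  | _ m ih =>
    intro v h1 hne hc
    rcases le_or_gt m s.card with hms | hms
    · exact ⟨m, v, h1, hms, rfl, rfl, hc⟩
    · have hmaps : ∀ i ∈ Finset.range (m + 1), v i ∈ s := by
        intro i hi
        simp only [Finset.mem_range] at hi
        rcases Nat.lt_or_ge i m with h | h
        · exact (hR _ _ (hc i h)).1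
        · have hi' : i = m := by omega
          subst hi'
          have h2 := (hR _ _ (hc (i - 1) (by omega))).2
          have hm : i - 1 + 1 = i := by omega
          rwa [hm] at h2
      have hcard : s.card < (Finset.range (m + 1)).card := by
        simpa using (by omega : s.card < m + 1)
      obtain ⟨i0, hi0, j0, hj0, hij0, hv0⟩ :=
        Finset.exists_ne_map_eq_of_card_lt_of_maps_to hcard hmaps
      simp only [Finset.mem_range] at hi0 hj0
      obtain ⟨i, j, hlt, hjm1, hvij⟩ :
          ∃ i j, i < j ∧ j < m + 1 ∧ v i = v j := by
        rcases lt_or_gt_of_ne hij0 with h | h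
        · exact ⟨i0, j0, h, hj0, hv0⟩
        · exact ⟨j0, i0, h, hi0, hv0.symm⟩
      have hjm : j ≤ m := by omega
      set d := j - i with hd
      have hd1 : 1 ≤ d := by omega
      set m' := m - d with hm'
      have hm'lt : m' < m := by omega
      have hm'i : i ≤ m' := by omega
      have h1' : 1 ≤ m' := by
        by_contra hcon
        have hz : m' = 0 := by omega
        have h0 : i = 0 ∧ j = m := by omega
        exact hne (by rw [← h0.1, ← h0.2]; exact hvij)
      set w : ℕ → X := fun t => if t ≤ i then v t else v (t + d) with hw
      have hw0 : w 0 = v 0 := by simp [hw]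
      have hwm : w m' = v m := by
        by_cases h : m' ≤ i
        · have h' : m' = i := by omega
          have hjm' : j = m := by omega
          show (if m' ≤ i then v m' else v (m' + d)) = v m
          rw [if_pos h, h', hvij, hjm']
        · simp only [hw, if_neg h]
          congr 1
          omega
      have hstep : ∀ t < m', R (w t) (w (t + 1)) := by
        intro t ht
        by_cases h1t : t + 1 ≤ i
        · simp only [hw, if_pos (by omega : t ≤ i), if_pos h1t]
          exact hc t (by omega)
        · by_cases h2t : t ≤ i
          · have hti : t = i := by omega
            have hjlt : j < m := by omega
            simp only [hw, if_pos h2t, if_neg h1t]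
            rw [hti, hvij]
            have he : i + 1 + d = j + 1 := by omega
            rw [he]
            exact hc j hjlt
          · simp only [hw, if_neg h2t, if_neg h1t]
            have he : t + 1 + d = t + d + 1 := by omega
            rw [he]
            exact hc (t + d) (by omega)
      obtain ⟨m'', w', a1, a2, a3, a4, a5⟩ :=
        ih m' hm'lt w h1' (by rw [hw0, hwm]; exact hne) hstep
      exact ⟨m'', w', a1, a2, by rw [a3, hw0], by rw [a4, hwm], a5⟩

lemma listSum_zero_mem : (0 : X →₀ ZMod p) ∈ listSum p n τ :=
  ⟨[], by simp, by simp, by simp⟩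

lemma listSum_mono (hn : n ≤ m) (hτ : τ ⊆ τ') : listSum p n τ ⊆ listSum p m τ' := by
  rintro a ⟨L, h1, h2, h3⟩
  exact ⟨L, le_trans h1 hn, fun e he => hτ (h2 e he), h3⟩

lemma listSum_add {a b : X →₀ ZMod p} (ha : a ∈ listSum p n τ) (hb : b ∈ listSum p m τ') :
    a + b ∈ listSum p (n + m) (τ ∪ τ') := by
  obtain ⟨L1, h1, h2, h3⟩ := ha
  obtain ⟨L2, g1, g2, g3⟩ := hb
  refine ⟨L1 ++ L2, ?_, ?_, ?_⟩
  · simp only [List.length_append]; omega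
  · intro e he
    rcases List.mem_append.mp he with h | h
    · exact Or.inl (h2 e h)
    · exact Or.inr (g2 e h)
  · rw [List.map_append, List.sum_append, h3, g3]

lemma listSum_neg (hτ : ∀ e ∈ τ, Prod.swap e ∈ τ) {a : X →₀ ZMod p} (ha : a ∈ listSum p n τ) :
    -a ∈ listSum p n τ := by
  obtain ⟨L, h1, h2, h3⟩ := ha
  refine ⟨L.map Prod.swap, by simpa using h1, ?_, ?_⟩
  · intro e he
    obtain ⟨e', he', rfl⟩ := List.mem_map.mp he
    exact hτ e' (h2 e' he')
  · subst h3
    induction L with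
    | nil => simp
    | cons e L ih =>
      have ih' := ih (by simpa using Nat.le_of_succ_le (by simpa using h1))
        (fun e' he' => h2 e' (List.mem_cons_of_mem _ he'))
      simp only [List.map_cons, List.sum_cons, Prod.fst_swap, Prod.snd_swap] at *
      rw [← ih']
      abel

lemma reach_of_sum (p : ℕ) [Fact p.Prime] (L : List (X × X)) {x y : X}
    (hsum : (L.map fun e => Finsupp.single e.1 (1 : ZMod p) - Finsupp.single e.2 1).sum
      = Finsupp.single x 1 - Finsupp.single y 1) :
    Relation.ReflTransGen (fun u v => (u, v) ∈ L ∨ (v, u) ∈ L) x y := by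
  classical
  set R : X → X → Prop := fun u v => (u, v) ∈ L ∨ (v, u) ∈ L with hR
  by_contra hreach
  set φ : (X →₀ ZMod p) →+ ZMod p :=
    Finsupp.liftAddHom
      (fun v => if Relation.ReflTransGen R x v then AddMonoidHom.id (ZMod p) else 0) with hφ
  have hsingle : ∀ a : X, φ (Finsupp.single a 1) =
      if Relation.ReflTransGen R x a then (1 : ZMod p) else 0 := by
    intro a
    rw [hφ, Finsupp.liftAddHom_apply_single]
    split_ifs <;> rfl
  have hzero : φ ((L.map fun e =>
      Finsupp.single e.1 (1 : ZMod p) - Finsupp.single e.2 1).sum) = 0 := by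
    rw [map_list_sum]
    apply List.sum_eq_zero
    intro z hz
    simp only [List.map_map, List.mem_map, Function.comp] at hz
    obtain ⟨e, he, rfl⟩ := hz
    rw [map_sub, hsingle, hsingle]
    have hmem : (e.1, e.2) ∈ L := by rwa [Prod.mk.eta]
    have hiff : Relation.ReflTransGen R x e.1 ↔ Relation.ReflTransGen R x e.2 :=
      ⟨fun h => h.tail (Or.inl hmem), fun h => h.tail (Or.inr hmem)⟩
    by_cases h : Relation.ReflTransGen R x e.1
    · rw [if_pos h, if_pos (hiff.mp h), sub_self]
    · rw [if_neg h, if_neg (fun h' => h (hiff.mpr h')), sub_self]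
  rw [hsum, map_sub, hsingle, hsingle, if_pos Relation.ReflTransGen.refl,
    if_neg hreach, sub_zero] at hzero
  exact one_ne_zero hzero

lemma listSum_trace [Fact p.Prime] (hE : IsCoarseStructure E) (hε : ε ∈ E)
    {x y : X} (h : Finsupp.single x (1 : ZMod p) - Finsupp.single y 1 ∈ listSum p n (symm2 ε)) :
    (x, y) ∈ iterEnt (symm2 ε) (2 * n) := by
  have hrefl : ∀ a : X, (a, a) ∈ symm2 ε := symm2_refl (hE.1 ε hε)
  by_cases hxy : x = y
  · subst hxy; exact iterEnt_refl hrefl _ x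
  obtain ⟨L, hlen, hmem, hsum⟩ := h
  have hreach := reach_of_sum p L hsum.symm
  obtain ⟨m0, v, h0, hm, hc⟩ := exists_chain_of_reflTransGen hreach
  classical
  set s : Finset X := (L.map Prod.fst ++ L.map Prod.snd).toFinset with hs
  have hR : ∀ u w : X, ((u, w) ∈ L ∨ (w, u) ∈ L) → u ∈ s ∧ w ∈ s := by
    intro u w h
    rcases h with h | h
    · constructor
      · simp only [hs, List.mem_toFinset, List.mem_append, List.mem_map]
        exact Or.inl ⟨(u, w), h, rfl⟩
      · simp only [hs, List.mem_toFinset, List.mem_append, List.mem_map]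
        exact Or.inr ⟨(u, w), h, rfl⟩
    · constructor
      · simp only [hs, List.mem_toFinset, List.mem_append, List.mem_map]
        exact Or.inr ⟨(w, u), h, rfl⟩
      · simp only [hs, List.mem_toFinset, List.mem_append, List.mem_map]
        exact Or.inl ⟨(w, u), h, rfl⟩
  have hm1 : 1 ≤ m0 := by
    rcases Nat.eq_zero_or_pos m0 with h | h
    · exfalso; apply hxy; rw [← h0, ← hm, h]
    · exact h
  obtain ⟨m', w, g1, g2, g3, g4, g5⟩ :=
    shorten hR m0 v hm1 (by rw [h0, hm]; exact hxy) hc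
  have hscard : s.card ≤ 2 * n := by
    rw [hs]
    have := List.toFinset_card_le (L.map Prod.fst ++ L.map Prod.snd)
    simp only [List.length_append, List.length_map] at this
    omega
  have hsteps : ∀ i < m', (w i, w (i + 1)) ∈ symm2 ε := by
    intro i hi
    rcases g5 i hi with h | h
    · exact hmem _ h
    · exact symm2_swap (hmem _ h)
  have hres := chain_mem_iterEnt hrefl (2 * n) m' w g1 (by omega) hsteps
  rw [g3, h0, g4, hm] at hres
  exact hres

end FreeAbCoarseAux

open FreeAbCoarseAux in
/-- For a connected coarse space `(X, E)` and a prime `p`, there is a group coarse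
structure `E'` on the free abelian group `A(X)` of exponent `p` on `X` whose subspace
structure on `X` (embedded as the standard generators) equals `E`. -/
theorem exists_group_coarse_structure_on_freeAbelian {X : Type*} (p : ℕ)
    [Fact p.Prime] (E : Set (Set (X × X)))
    (hE : IsCoarseStructure E) (hconn : IsConnectedCoarse E) :
    ∃ E' : Set (Set ((X →₀ ZMod p) × (X →₀ ZMod p))),
      IsCoarseStructure E' ∧ IsAddCoarseGroup E' ∧
      {s : Set (X × X) | ∃ ε' ∈ E', s =
        {q : X × X | (Finsupp.single q.1 (1 : ZMod p),
          Finsupp.single q.2 (1 : ZMod p)) ∈ ε'}} = E := by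
  classical
  set A := X →₀ ZMod p with hA
  set E' : Set (Set (A × A)) :=
    {η | (∀ a : A, (a, a) ∈ η) ∧
      ∃ n ε, ε ∈ E ∧ ∀ q ∈ η, q.1 - q.2 ∈ listSum p n (symm2 ε)} with hE'
  have hswapclosed : ∀ ε : Set (X × X), ∀ e ∈ symm2 ε, Prod.swap e ∈ symm2 ε := by
    rintro ε ⟨a, b⟩ h
    exact symm2_swap h
  refine ⟨E', ?_, ?_, ?_⟩
  · -- coarse structure
    refine ⟨?_, ?_, ?_, ?_⟩
    · intro η hη a
      exact hη.1 a
    · rintro η ⟨hηr, n, ε, hε, hηd⟩ θ ⟨hθr, m, δ, hδ, hθd⟩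
      refine ⟨fun a => ⟨a, hηr a, hθr a⟩, n + m, ε ∪ δ, union_mem hE hε hδ, ?_⟩
      rintro q ⟨z, h1, h2⟩
      rw [← sub_add_sub_cancel q.1 z q.2]
      exact listSum_mono le_rfl symm2_union_subset
        (listSum_add (hηd _ h1) (hθd _ h2))
    · rintro η ⟨hηr, n, ε, hε, hηd⟩
      refine ⟨fun a => hηr a, n, ε, hε, ?_⟩
      intro q hq
      have := listSum_neg (hswapclosed ε) (hηd _ hq)
      rwa [neg_sub] at this
    · rintro η ⟨hηr, n, ε, hε, hηd⟩ η' hsub hrefl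
      exact ⟨hrefl, n, ε, hε, fun q hq => hηd q (hsub hq)⟩
  · -- group structure
    constructor
    · rintro η ⟨hηr, ε', ⟨hε'r, n, ε, hε, hε'd⟩, δ', ⟨hδ'r, m, δ, hδ, hδ'd⟩, hrect⟩
      refine ⟨{q : A × A | q.1 - q.2 ∈ listSum p (n + m) (symm2 (ε ∪ δ))},
        ⟨fun a => by simp only [Set.mem_setOf_eq, sub_self]; exact listSum_zero_mem,
          n + m, ε ∪ δ, union_mem hE hε hδ, fun q hq => hq⟩, ?_⟩
      intro q hq
      have h := hrect hq
      have h1 := hε'd _ h.1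
      have h2 := hδ'd _ h.2
      have hmem : q.1.1 + q.1.2 - (q.2.1 + q.2.2) ∈ listSum p (n + m) (symm2 (ε ∪ δ)) := by
        rw [add_sub_add_comm]
        exact listSum_mono le_rfl symm2_union_subset (listSum_add h1 h2)
      exact hmem
    · rintro η ⟨hηr, n, ε, hε, hηd⟩
      refine ⟨{q : A × A | q.1 - q.2 ∈ listSum p n (symm2 ε)},
        ⟨fun a => by simp only [Set.mem_setOf_eq, sub_self]; exact listSum_zero_mem,
          n, ε, hε, fun q hq => hq⟩, ?_⟩
      intro q hq
      have hmem : -q.1 - -q.2 ∈ listSum p n (symm2 ε) := by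
        rw [neg_sub_neg, ← neg_sub]
        exact listSum_neg (hswapclosed ε) (hηd _ hq)
      exact hmem
  · -- trace equality
    have hone : (1 : ZMod p) ≠ 0 := one_ne_zero
    have hinj : Function.Injective fun a : X => Finsupp.single a (1 : ZMod p) :=
      Finsupp.single_left_injective hone
    apply Set.eq_of_subset_of_subset
    · rintro s ⟨ε', ⟨hε'r, n, ε, hε, hε'd⟩, rfl⟩
      refine hE.2.2.2 _ (iterEnt_mem hE (symm2_mem hE hε) (2 * n)) _ ?_ ?_
      · rintro ⟨a, b⟩ hq
        exact listSum_trace hE hε (hε'd _ hq)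
      · intro a
        exact hε'r (Finsupp.single a (1 : ZMod p))
    · intro ε hε
      refine ⟨{q : A × A | q.1 = q.2 ∨ ∃ r ∈ ε,
          q.1 = Finsupp.single r.1 (1 : ZMod p) ∧ q.2 = Finsupp.single r.2 1},
        ⟨fun a => Or.inl rfl, 1, ε, hε, ?_⟩, ?_⟩
      · rintro q (h | ⟨r, hr, h1, h2⟩)
        · rw [h, sub_self]; exact listSum_zero_mem
        · rw [h1, h2]
          exact ⟨[r], by simp, by rintro e he; simp at he; subst he; exact Or.inl hr,
            by simp⟩
      · ext ⟨a, b⟩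
        simp only [Set.mem_setOf_eq]
        constructor
        · intro h
          exact Or.inr ⟨(a, b), h, rfl, rfl⟩
        · rintro (h | ⟨r, hr, h1, h2⟩)
          · have : a = b := hinj h
            subst this
            exact hE.1 ε hε a
          · have ha : a = r.1 := hinj h1
            have hb : b = r.2 := hinj h2
            rw [ha, hb, Prod.mk.eta]
            exact hr
end

section
/- Let X be an infinite set with the bounded coarse structure E (all supersets of the diagonal), and let A(X) be the free abelian group of exponent p on X, which is the free coarse group over (X,E) in the variety A_p. Then A(X) with its free coarse structure is unbounded, even though (X,E) is coarsely equivalent to a one-point space whose free coarse group is a bounded cyclic group of order p. Hence coarsely equivalent coarse spaces can have non-coarsely-equivalent free coarse groups. -/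
/-- Coarse equivalence of coarse spaces: coarse maps in both directions whose
composites are uniformly close to the identities. -/
def CoarselyEquiv {X Y : Type*} (EX : Set (Set (X × X))) (EY : Set (Set (Y × Y))) :
    Prop :=
  ∃ (f : X → Y) (g : Y → X), IsCoarseMap EX EY f ∧ IsCoarseMap EY EX g ∧
    (∃ ε ∈ EX, ∀ x : X, (x, g (f x)) ∈ ε) ∧ (∃ δ ∈ EY, ∀ y : Y, (y, f (g y)) ∈ δ)

/-- The bounded coarse structure on `X`: all supersets of the diagonal. -/
def boundedCS (X : Type*) : Set (Set (X × X)) := {ε | ∀ x : X, (x, x) ∈ ε}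

/-- A group ideal on an additive group. -/
def IsAddGroupIdeal {A : Type*} [AddGroup A] (I : Set (Set A)) : Prop :=
  (∀ B ∈ I, ∀ C ⊆ B, C ∈ I) ∧
  (∀ B ∈ I, ∀ C ∈ I, B ∪ C ∈ I) ∧
  (∀ B : Set A, B.Finite → B ∈ I) ∧
  (∀ B ∈ I, ∀ C ∈ I, {a : A | ∃ b ∈ B, ∃ c ∈ C, a = b - c} ∈ I)

/-- The coarse structure `E_I` on an additive group determined by a group ideal. -/
def addIdealCoarse {A : Type*} [AddGroup A] (I : Set (Set A)) : Set (Set (A × A)) :=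
  {ε | (∀ a : A, (a, a) ∈ ε) ∧ ∃ B ∈ I, (0 : A) ∈ B ∧
    ε ⊆ {q : A × A | ∃ b ∈ B, q.2 = b + q.1}}

/-- The ideal of the free coarse structure on `A(X)` over the bounded coarse space
`(X, E)`, with base `Y_{n,ε} + {0, z, …, (p−1)z}`. -/
def freeIdeal {X : Type*} (p : ℕ) (z : X) : Set (Set (X →₀ ZMod p)) :=
  {A | ∃ n : ℕ, ∃ ε ∈ boundedCS X, (∀ q : X × X, q ∈ ε ↔ (q.2, q.1) ∈ ε) ∧
    A ⊆ {a | ∃ b ∈ nSumset (Yset p ε) n, ∃ i : ZMod p,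
      a = b + i • Finsupp.single z (1 : ZMod p)}}

section Aux
variable {X : Type*} {p : ℕ}

lemma Yset_mono {ε ε' : Set (X × X)} (h : ε ⊆ ε') : Yset p ε ⊆ Yset p ε' := by
  rintro a ⟨q, hq, rfl⟩; exact ⟨q, h hq, rfl⟩

lemma Yset_neg {ε : Set (X × X)} (hsym : ∀ q : X × X, q ∈ ε ↔ (q.2, q.1) ∈ ε)
    {a : X →₀ ZMod p} (ha : a ∈ Yset p ε) : -a ∈ Yset p ε := by
  obtain ⟨⟨x, y⟩, hq, rfl⟩ := ha
  exact ⟨(y, x), (hsym _).1 hq, by rw [neg_sub]⟩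

lemma nSumset_mono {A : Type*} [AddCommGroup A] {S T : Set A} (h : S ⊆ T) (n : ℕ) :
    nSumset S n ⊆ nSumset T n := by
  rintro a ⟨f, hf, rfl⟩; exact ⟨f, fun i => h (hf i), rfl⟩

lemma nSumset_mono_nat {A : Type*} [AddCommGroup A] {S : Set A} (h0 : (0 : A) ∈ S)
    {n m : ℕ} (h : n ≤ m) : nSumset S n ⊆ nSumset S m := by
  rintro a ⟨f, hf, rfl⟩
  set F : ℕ → A := fun i => if hi : i < n then f ⟨i, hi⟩ else 0 with hF
  refine ⟨fun i => F i, fun i => ?_, ?_⟩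
  · simp only [hF]; split
    · exact hf _
    · exact h0
  · have h1 : ∑ i : Fin n, f i = ∑ i ∈ Finset.range n, F i := by
      rw [← Fin.sum_univ_eq_sum_range]
      exact Finset.sum_congr rfl fun i _ => by simp [hF, i.isLt]
    have h2 : ∑ i ∈ Finset.range n, F i = ∑ i ∈ Finset.range m, F i := by
      refine Finset.sum_subset (Finset.range_subset_range.2 h) fun i _ hi => ?_
      simp only [Finset.mem_range, not_lt] at hi
      simp [hF, Nat.not_lt.2 hi]
    rw [h1, h2, ← Fin.sum_univ_eq_sum_range]

lemma add_mem_nSumset {A : Type*} [AddCommGroup A] {S : Set A} {a b : A} {n m : ℕ}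
    (ha : a ∈ nSumset S n) (hb : b ∈ nSumset S m) : a + b ∈ nSumset S (n + m) := by
  obtain ⟨f, hf, rfl⟩ := ha; obtain ⟨g, hg, rfl⟩ := hb
  refine ⟨Fin.append f g, fun i => ?_, ?_⟩
  · refine Fin.addCases (fun j => ?_) (fun j => ?_) i
    · rw [Fin.append_left]; exact hf j
    · rw [Fin.append_right]; exact hg j
  · rw [Fin.sum_univ_add]
    simp [Fin.append_left, Fin.append_right]

lemma neg_mem_nSumset {A : Type*} [AddCommGroup A] {S : Set A} {a : A} {n : ℕ}
    (hS : ∀ b ∈ S, -b ∈ S) (ha : a ∈ nSumset S n) : -a ∈ nSumset S n := by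
  obtain ⟨f, hf, rfl⟩ := ha
  exact ⟨fun i => -f i, fun i => hS _ (hf i), by rw [← Finset.sum_neg_distrib]⟩

lemma zero_mem_nSumset_zero {A : Type*} [AddCommGroup A] {S : Set A} :
    (0 : A) ∈ nSumset S 0 :=
  ⟨fun i => i.elim0, fun i => i.elim0, by simp⟩

def fullEnt (z : X) : Set (X × X) := {q | q.1 = q.2 ∨ q.1 = z ∨ q.2 = z}

lemma fullEnt_bounded (z : X) : fullEnt z ∈ boundedCS X := fun x => Or.inl rfl

lemma fullEnt_symm (z : X) : ∀ q : X × X, q ∈ fullEnt z ↔ (q.2, q.1) ∈ fullEnt z := by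
  intro q; unfold fullEnt; constructor <;> (rintro (h | h | h) <;> simp [h] <;> tauto)

lemma single_decomp [NeZero p] (z x : X) (k : ZMod p) :
    ∃ n, ∃ b ∈ nSumset (Yset p (fullEnt z)) n,
      Finsupp.single x k = b + k • Finsupp.single z (1 : ZMod p) := by
  have hmem : (Finsupp.single x 1 - Finsupp.single z 1 : X →₀ ZMod p)
      ∈ Yset p (fullEnt z) := ⟨(x, z), Or.inr (Or.inr rfl), rfl⟩
  have hsm : ∀ y : X, (k.val : ℕ) • (Finsupp.single y (1 : ZMod p))
      = Finsupp.single y k := by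
    intro y
    rw [Finsupp.smul_single]
    congr 1
    simp [nsmul_eq_mul, ZMod.natCast_val, ZMod.cast_id]
  refine ⟨k.val, (k.val : ℕ) • (Finsupp.single x 1 - Finsupp.single z 1),
    ⟨fun _ => Finsupp.single x 1 - Finsupp.single z 1, fun _ => hmem, by
      simp [Finset.sum_const, Finset.card_univ]; rw [smul_sub, hsm, hsm]⟩, ?_⟩
  rw [smul_sub, hsm, hsm, Finsupp.smul_single', mul_one, sub_add_cancel]

lemma decomp [NeZero p] (z : X) (c : X →₀ ZMod p) :
    ∃ n, ∃ b ∈ nSumset (Yset p (fullEnt z)) n, ∃ i : ZMod p,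
      c = b + i • Finsupp.single z (1 : ZMod p) := by
  induction c using Finsupp.induction with
  | zero => exact ⟨0, 0, zero_mem_nSumset_zero, 0, by simp⟩
  | single_add x k c hx hk ih =>
    obtain ⟨n, b, hb, i, rfl⟩ := ih
    obtain ⟨m, b', hb', hxk⟩ := single_decomp z x k
    exact ⟨m + n, b' + b, add_mem_nSumset hb' hb, k + i, by rw [hxk, add_smul]; abel⟩

end Aux

lemma freeIdeal_diff {X : Type*} {p : ℕ} [NeZero p] (z : X)
    {B0 B1 : Set (X →₀ ZMod p)} (hB1 : B1 ∈ freeIdeal p z) (hB0 : B0 ∈ freeIdeal p z)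
    (c : X →₀ ZMod p) :
    {a | ∃ b1 ∈ B1, ∃ b0 ∈ B0, a = b1 + c - b0} ∈ freeIdeal p z := by
  obtain ⟨n1, ε1, hd1, hs1, hsub1⟩ := hB1
  obtain ⟨n0, ε0, hd0, hs0, hsub0⟩ := hB0
  obtain ⟨nc, bc, hbc, ic, hc⟩ := decomp z c
  have hsub01 : ε1 ⊆ ε1 ∪ ε0 ∪ fullEnt z := fun q h => Or.inl (Or.inl h)
  have hsub00 : ε0 ⊆ ε1 ∪ ε0 ∪ fullEnt z := fun q h => Or.inl (Or.inr h)
  have hsubf : fullEnt z ⊆ ε1 ∪ ε0 ∪ fullEnt z := fun q h => Or.inr h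
  refine ⟨n1 + nc + n0, ε1 ∪ ε0 ∪ fullEnt z, fun x => Or.inl (Or.inl (hd1 x)),
    fun q => ?_, ?_⟩
  · simp only [Set.mem_union]
    rw [hs1 q, hs0 q, fullEnt_symm z q]
  · rintro a ⟨b1, hb1m, b0, hb0m, rfl⟩
    obtain ⟨u1, hu1, i1, he1⟩ := hsub1 hb1m
    obtain ⟨u0, hu0, i0, he0⟩ := hsub0 hb0m
    refine ⟨u1 + bc + -u0, ?_, i1 + ic - i0, ?_⟩
    · exact add_mem_nSumset
        (add_mem_nSumset (nSumset_mono (Yset_mono hsub01) _ hu1)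
          (nSumset_mono (Yset_mono hsubf) _ hbc))
        (nSumset_mono (Yset_mono hsub00) _
          (neg_mem_nSumset (fun b hb => Yset_neg hs0 hb) hu0))
    · rw [he1, he0, hc, sub_smul, add_smul]; abel

/-- Remark 3: for an infinite set `X` with the bounded coarse structure, the free
coarse group `A(X)` in the variety `A_p` is unbounded, even though `(X, E)` is
coarsely equivalent to a one-point space, whose free coarse group (a cyclic group of
order `p`) is bounded; hence the free coarse groups are not coarsely equivalent. -/
theorem free_coarse_group_not_invariant_under_coarse_equivalence
    {X : Type*} [Infinite X] (p : ℕ) [Fact p.Prime] (z : X) :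
    (Set.univ : Set (X →₀ ZMod p)) ∉ freeIdeal p z ∧
    (∀ J : Set (Set (ZMod p)), IsAddGroupIdeal J → (Set.univ : Set (ZMod p)) ∈ J) ∧
    CoarselyEquiv (boundedCS X) (boundedCS PUnit) ∧
    ¬ CoarselyEquiv (addIdealCoarse (freeIdeal p z)) (boundedCS (ZMod p)) := by
  classical
  have hnz : NeZero p := ⟨(Fact.out : p.Prime).ne_zero⟩
  have h1 : (Set.univ : Set (X →₀ ZMod p)) ∉ freeIdeal p z := by
    rintro ⟨n, ε, hεb, hsym, hsub⟩
    obtain ⟨s, hs⟩ := Infinite.exists_subset_card_eq X (2 * n + 2)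
    obtain ⟨b, ⟨f, hf, rfl⟩, i, ha⟩ :=
      hsub (Set.mem_univ (∑ x ∈ s, Finsupp.single x (1 : ZMod p)))
    have hone : (1 : ZMod p) ≠ 0 := one_ne_zero
    have hsupport : (∑ x ∈ s, Finsupp.single x (1 : ZMod p)).support = s := by
      rw [Finsupp.support_sum_eq_biUnion]
      · refine Finset.ext fun y => ?_
        simp [Finsupp.support_single_ne_zero _ hone]
      · intro i j hij
        rw [Finsupp.support_single_ne_zero _ hone, Finsupp.support_single_ne_zero _ hone]
        simpa using hij
    have hcard2 : ∀ i : Fin n, (f i).support.card ≤ 2 := by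
      intro i
      obtain ⟨q, -, hfi⟩ := hf i
      rw [hfi]
      refine le_trans (Finset.card_le_card (Finsupp.support_sub)) ?_
      refine le_trans (Finset.card_union_le _ _) ?_
      have h1 := Finset.card_le_card
        (Finsupp.support_single_subset (a := q.1) (b := (1 : ZMod p)))
      have h2 := Finset.card_le_card
        (Finsupp.support_single_subset (a := q.2) (b := (1 : ZMod p)))
      simp only [Finset.card_singleton] at h1 h2
      omega
    have hb : (∑ i, f i).support.card ≤ 2 * n := by
      refine le_trans (Finset.card_le_card Finsupp.support_finset_sum) ?_
      refine le_trans Finset.card_biUnion_le ?_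
      calc ∑ i, (f i).support.card ≤ ∑ _i : Fin n, 2 :=
            Finset.sum_le_sum fun i _ => hcard2 i
        _ = 2 * n := by simp [mul_comm]
    have hfin : (∑ x ∈ s, Finsupp.single x (1 : ZMod p)).support.card ≤ 2 * n + 1 := by
      rw [ha]
      refine le_trans (Finset.card_le_card Finsupp.support_add) ?_
      refine le_trans (Finset.card_union_le _ _) ?_
      have h2 : (i • Finsupp.single z (1 : ZMod p)).support.card ≤ 1 := by
        have hsub2 : (i • Finsupp.single z (1 : ZMod p)).support ⊆ {z} :=
          le_trans Finsupp.support_smul Finsupp.support_single_subset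
        simpa using Finset.card_le_card hsub2
      omega
    rw [hsupport, hs] at hfin
    omega
  refine ⟨h1, fun J hJ => hJ.2.2.1 Set.univ Set.finite_univ, ?_, ?_⟩
  · refine ⟨fun _ => PUnit.unit, fun _ => z, ?_, ?_, ?_, ?_⟩
    · intro ε hε
      exact ⟨Set.univ, fun y => Set.mem_univ _, fun q _ => Set.mem_univ _⟩
    · intro ε hε
      exact ⟨Set.univ, fun x => Set.mem_univ _, fun q _ => Set.mem_univ _⟩
    · exact ⟨Set.univ, fun x => Set.mem_univ _, fun x => Set.mem_univ _⟩
    · exact ⟨Set.univ, fun y => Set.mem_univ _, fun y => Set.mem_univ _⟩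
  · rintro ⟨f, g, hf, hg, ⟨ε₀, hε₀, hclose⟩, -⟩
    obtain ⟨δ, hδ, hgd⟩ := hg Set.univ (fun y => Set.mem_univ _)
    obtain ⟨hδdiag, B1, hB1, h01, hδsub⟩ := hδ
    obtain ⟨hεdiag, B0, hB0, h00, hεsub⟩ := hε₀
    set c := g (f 0) with hcdef
    have key : (Set.univ : Set (X →₀ ZMod p)) ⊆
        {a | ∃ b1 ∈ B1, ∃ b0 ∈ B0, a = b1 + c - b0} := by
      intro a _
      obtain ⟨b0, hb0, he0⟩ := hεsub (hclose a)
      obtain ⟨b1, hb1, he1⟩ := hδsub (hgd (f 0, f a) (Set.mem_univ _))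
      refine ⟨b1, hb1, b0, hb0, ?_⟩
      have hba : b0 + a = b1 + c := he0.symm.trans he1
      rw [← hba]; abel
    obtain ⟨n, ε, hεb, hεs, hsubset⟩ := freeIdeal_diff z hB1 hB0 c
    exact h1 ⟨n, ε, hεb, hεs, key.trans hsubset⟩
end
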